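/- arXiv:1610.05207 — 5 statements merged into one kernel-verified Lean document; each statement's English description precedes it below -/
import Mathlib

section
/- Let R be a commutative ring, δ₁, δ₂ : R → R two R-derivations, n a finite type, and D an n×n matrix over R with D * D = ω • 1. Set Φ = D.map δ₁, Ψ = D.map δ₂, and H = (D.map δ₁).map δ₂ (entrywise application of δ₁ followed by δ₂). Then Φ * Ψ + Ψ * Φ + D * H + H * D = δ₂(δ₁(ω)) • 1. -/
/-- Lemma 4.4 (Zemke), abstract form: the anticommutator of two entrywise
derivatives of a curved differential is chain homotopic to the mixed second
derivative of the curvature. -/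
theorem anticommutator_of_basepoint_actions
    {R : Type*} [CommRing R] (δ₁ δ₂ : R → R)
    (hadd₁ : ∀ x y, δ₁ (x + y) = δ₁ x + δ₁ y)
    (hmul₁ : ∀ x y, δ₁ (x * y) = δ₁ x * y + x * δ₁ y)
    (hadd₂ : ∀ x y, δ₂ (x + y) = δ₂ x + δ₂ y)
    (hmul₂ : ∀ x y, δ₂ (x * y) = δ₂ x * y + x * δ₂ y)
    {n : Type*} [Fintype n] [DecidableEq n]
    (D : Matrix n n R) (ω : R) (hD : D * D = ω • (1 : Matrix n n R)) :
    D.map δ₁ * D.map δ₂ + D.map δ₂ * D.map δ₁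
      + D * (D.map δ₁).map δ₂ + (D.map δ₁).map δ₂ * D
      = δ₂ (δ₁ ω) • (1 : Matrix n n R) := by
  have h0₁ : δ₁ 0 = 0 := by
    have h := hadd₁ 0 0; rw [add_zero] at h; exact (left_eq_add.mp h)
  have h0₂ : δ₂ 0 = 0 := by
    have h := hadd₂ 0 0; rw [add_zero] at h; exact (left_eq_add.mp h)
  have hsum₁ : ∀ (s : Finset n) (f : n → R),
      δ₁ (∑ k ∈ s, f k) = ∑ k ∈ s, δ₁ (f k) := by
    intro s f
    induction s using Finset.cons_induction with
    | empty => simpa using h0₁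
    | cons a s ha ih => rw [Finset.sum_cons, hadd₁, ih, Finset.sum_cons]
  have hsum₂ : ∀ (s : Finset n) (f : n → R),
      δ₂ (∑ k ∈ s, f k) = ∑ k ∈ s, δ₂ (f k) := by
    intro s f
    induction s using Finset.cons_induction with
    | empty => simpa using h0₂
    | cons a s ha ih => rw [Finset.sum_cons, hadd₂, ih, Finset.sum_cons]
  ext i j
  have hentry := congrFun (congrFun hD i) j
  have key : δ₂ (δ₁ ((D * D) i j)) = δ₂ (δ₁ ((ω • (1 : Matrix n n R)) i j)) := by
    rw [hentry]
  rw [Matrix.mul_apply] at key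
  rw [hsum₁, hsum₂] at key
  have hlhs : ∀ k, δ₂ (δ₁ (D i k * D k j))
      = δ₂ (δ₁ (D i k)) * D k j + δ₁ (D i k) * δ₂ (D k j)
        + δ₂ (D i k) * δ₁ (D k j) + D i k * δ₂ (δ₁ (D k j)) := by
    intro k
    rw [hmul₁, hadd₂, hmul₂, hmul₂]; ring
  simp only [hlhs] at key
  have hrhs : δ₂ (δ₁ ((ω • (1 : Matrix n n R)) i j))
      = (δ₂ (δ₁ ω) • (1 : Matrix n n R)) i j := by
    by_cases h : i = j
    · simp [Matrix.smul_apply, Matrix.one_apply, h]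
    · simp [Matrix.smul_apply, Matrix.one_apply, h, h0₁, h0₂]
  rw [hrhs] at key
  rw [← key]
  simp only [Matrix.add_apply, Matrix.mul_apply, Matrix.map_apply,
    Finset.sum_add_distrib]
  ring
end

section
/- Let S be a commutative ring of characteristic 2, n a finite type, C ∈ S[U] a polynomial of natDegree at most 1, and D an n×n matrix over the polynomial ring S[U] with D * D = C • 1. Let Φ be the matrix obtained by applying the formal derivative d/dU to each entry of D, and let H be the matrix obtained by applying the second Hasse (divided) derivative to each entry of D. Then Φ * Φ = D * H + H * D. -/
open Polynomial Finset in
lemma hasseDeriv_two_mul {R : Type*} [CommRing R] (f g : R[X]) :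
    hasseDeriv 2 (f * g) =
      hasseDeriv 2 f * g + derivative f * derivative g + f * hasseDeriv 2 g := by
  rw [hasseDeriv_mul]
  have : antidiagonal 2 = {((0:ℕ),(2:ℕ)), (1,1), (2,0)} := by decide
  rw [this, Finset.sum_insert (by decide), Finset.sum_insert (by decide),
    Finset.sum_singleton]
  simp only [hasseDeriv_zero', hasseDeriv_one']
  ring

/-- Lemma 4.5 (Zemke), abstract form: if the curvature C has degree at most 1 in U,
the square of the entrywise derivative of the differential is chain homotopic to
zero, via the second Hasse derivative. -/
theorem basepoint_action_squares_nullhomotopic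
    {S : Type*} [CommRing S] [CharP S 2]
    {n : Type*} [Fintype n] [DecidableEq n]
    (C : Polynomial S) (hC : C.natDegree ≤ 1)
    (D : Matrix n n (Polynomial S))
    (hD : D * D = C • (1 : Matrix n n (Polynomial S))) :
    D.map (fun p => Polynomial.derivative p) * D.map (fun p => Polynomial.derivative p)
      = D * D.map (fun p => Polynomial.hasseDeriv 2 p)
        + D.map (fun p => Polynomial.hasseDeriv 2 p) * D := by
  have key : ∀ i j,
      (D.map (fun p => Polynomial.hasseDeriv 2 p) * D) i j
        + (D.map (fun p => Polynomial.derivative p) * D.map (fun p => Polynomial.derivative p)) i j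
        + (D * D.map (fun p => Polynomial.hasseDeriv 2 p)) i j = 0 := by
    intro i j
    have h1 : Polynomial.hasseDeriv 2 ((D * D) i j) = 0 := by
      rw [hD]
      by_cases h : i = j <;>
        simp [Matrix.smul_apply, Matrix.one_apply, h,
          Polynomial.hasseDeriv_eq_zero_of_lt_natDegree C 2 (by omega)]
    rw [Matrix.mul_apply] at h1
    rw [map_sum] at h1
    simp only [Matrix.mul_apply, Matrix.map_apply]
    rw [← Finset.sum_add_distrib, ← Finset.sum_add_distrib]
    rw [← h1]
    apply Finset.sum_congr rfl
    intro k _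
    rw [hasseDeriv_two_mul]
  have char2 : ∀ p : Polynomial S, p + p = 0 := by
    intro p
    have h2 : ((2 : ℕ) : Polynomial S) = 0 := CharP.cast_eq_zero (Polynomial S) 2
    push_cast at h2
    calc p + p = 2 * p := by ring
    _ = 0 := by rw [h2]; ring
  refine Matrix.ext fun i j => ?_
  have := key i j
  simp only [Matrix.add_apply]
  -- from a + b + c = 0 with char 2 derive b = c + a
  set a := (D.map (fun p => Polynomial.hasseDeriv 2 p) * D) i j
  set b := (D.map (fun p => Polynomial.derivative p) * D.map (fun p => Polynomial.derivative p)) i j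
  set c := (D * D.map (fun p => Polynomial.hasseDeriv 2 p)) i j
  have hb : b = b + (a + b + c) := by rw [this]; ring
  rw [hb]
  linear_combination char2 b
end

section
/- Let R be a ring of characteristic 2 (i.e., 2 = 0 in R), let u be in the center of R, and let a₀, a₁, a₂, s⁻, s⁺ ∈ R satisfy: a₀ * a₀ = u, a₀ * a₁ + a₁ * a₀ = u, a₀ * a₂ + a₂ * a₀ = u, and s⁻ * a₁ * s⁺ = s⁻ * a₂ * s⁺. Then s⁻ * a₀ * (a₂ + a₀) * (a₁ + a₀) * s⁺ = s⁻ * a₀ * a₂ * a₁ * s⁺. -/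
/-- Equation (11.2) in Lemma 11.4 (Zemke): invariance of the graph action map
under splitting off a consecutive pair of edges to form a trivalent vertex. -/
theorem trivalent_vertex_splitting
    {R : Type*} [Ring R] (h2 : (2 : R) = 0)
    (u : R) (hu : ∀ x : R, u * x = x * u)
    (a₀ a₁ a₂ sm sp : R)
    (h00 : a₀ * a₀ = u)
    (h01 : a₀ * a₁ + a₁ * a₀ = u)
    (h02 : a₀ * a₂ + a₂ * a₀ = u)
    (htriv : sm * a₁ * sp = sm * a₂ * sp) :
    sm * a₀ * (a₂ + a₀) * (a₁ + a₀) * sp = sm * a₀ * a₂ * a₁ * sp := by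
  have hchar : ∀ x : R, x + x = 0 := fun x => by
    have : (2 : R) * x = 0 := by rw [h2, zero_mul]
    simpa [two_mul] using this
  have hA : a₀ * a₂ = u - a₂ * a₀ := eq_sub_of_add_eq h02
  have e1 : a₀ * a₂ * a₀ = u * a₀ - u * a₂ := by
    calc a₀ * a₂ * a₀ = (u - a₂ * a₀) * a₀ := by rw [hA]
      _ = u * a₀ - a₂ * (a₀ * a₀) := by noncomm_ring
      _ = u * a₀ - a₂ * u := by rw [h00]
      _ = u * a₀ - u * a₂ := by rw [← hu a₂]
  have key : a₀ * (a₂ + a₀) * (a₁ + a₀)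
      = a₀ * a₂ * a₁ + (u * a₁ - u * a₂) + (u * a₀ + u * a₀) := by
    calc a₀ * (a₂ + a₀) * (a₁ + a₀)
        = a₀ * a₂ * a₁ + a₀ * a₂ * a₀ + (a₀ * a₀) * a₁ + (a₀ * a₀) * a₀ := by
          noncomm_ring
      _ = a₀ * a₂ * a₁ + (u * a₀ - u * a₂) + u * a₁ + u * a₀ := by rw [e1, h00]
      _ = a₀ * a₂ * a₁ + (u * a₁ - u * a₂) + (u * a₀ + u * a₀) := by noncomm_ring
  calc sm * a₀ * (a₂ + a₀) * (a₁ + a₀) * sp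
      = sm * (a₀ * (a₂ + a₀) * (a₁ + a₀)) * sp := by noncomm_ring
    _ = sm * (a₀ * a₂ * a₁ + (u * a₁ - u * a₂) + (u * a₀ + u * a₀)) * sp := by rw [key]
    _ = sm * (a₀ * a₂ * a₁) * sp + (sm * (u * a₁) * sp - sm * (u * a₂) * sp)
        + sm * (u * a₀ + u * a₀) * sp := by noncomm_ring
    _ = sm * a₀ * a₂ * a₁ * sp := by
        rw [hchar (u * a₀), mul_zero, zero_mul, add_zero,
            ← mul_assoc sm u, ← hu sm, ← mul_assoc sm u, ← hu sm]
        rw [mul_assoc u sm a₁, mul_assoc u sm a₂, mul_assoc u (sm * a₁) sp,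
            mul_assoc u (sm * a₂) sp, htriv, sub_self, add_zero]
        noncomm_ring
end

section
/- Let R be a ring of characteristic 2 and let t⁻, t⁺, s⁻, s⁺, s'⁺, t'⁺, φ' ∈ R satisfy: (1) t⁺ * s⁻ + s⁺ * t⁻ + 1 = 0; (2) s'⁺ * s⁺ = s⁺ * s'⁺; (3) t⁻ * s⁺ = 1; (4) s'⁺ = φ' * t'⁺; (5) t'⁺ * t⁺ = t⁺ * t'⁺; (6) t⁻ * φ' * t⁺ = 1. Then t⁻ * s'⁺ + s'⁺ * t⁻ = t'⁺ * s⁻. -/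
/-- Lemma 4.26 (Zemke), algebraic content: the bypass triple from
quasi-stabilization, T⁻S'⁺ + S'⁺T⁻ ≃ T'⁺S⁻. -/
theorem bypass_triple_from_quasi_stabilization
    {R : Type*} [Ring R] (h2 : (2 : R) = 0)
    (tm tp sm sp sp' tp' φ' : R)
    (h1 : tp * sm + sp * tm + 1 = 0)
    (h2' : sp' * sp = sp * sp')
    (h3 : tm * sp = 1)
    (h4 : sp' = φ' * tp')
    (h5 : tp' * tp = tp * tp')
    (h6 : tm * φ' * tp = 1) :
    tm * sp' + sp' * tm = tp' * sm := by
  have key : tm * φ' * tp' * (tp * sm + sp * tm + 1) = 0 := by rw [h1, mul_zero]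
  have e1 : tm * φ' * tp' * (tp * sm) = tp' * sm := by
    calc tm * φ' * tp' * (tp * sm) = tm * φ' * (tp' * tp) * sm := by noncomm_ring
      _ = tm * φ' * (tp * tp') * sm := by rw [h5]
      _ = (tm * φ' * tp) * (tp' * sm) := by noncomm_ring
      _ = tp' * sm := by rw [h6, one_mul]
  have e2 : tm * φ' * tp' * (sp * tm) = sp' * tm := by
    calc tm * φ' * tp' * (sp * tm) = tm * ((φ' * tp') * sp) * tm := by noncomm_ring
      _ = tm * (sp' * sp) * tm := by rw [h4]
      _ = (tm * sp) * (sp' * tm) := by rw [h2']; noncomm_ring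
      _ = sp' * tm := by rw [h3, one_mul]
  have e3 : tm * φ' * tp' * 1 = tm * sp' := by rw [h4, mul_one, mul_assoc]
  rw [mul_add, mul_add, e1, e2, e3] at key
  have hneg : ∀ x : R, -x = x := fun x => by
    have h : x + x = 0 := by
      have := congrArg (· * x) h2
      simpa [two_mul] using this
    exact neg_eq_of_add_eq_zero_right h
  have hc : tm * sp' = -(tp' * sm + sp' * tm) := by
    exact eq_neg_of_add_eq_zero_right key
  rw [hc, neg_add]
  calc -(tp' * sm) + -(sp' * tm) + sp' * tm = -(tp' * sm) := by abel
    _ = tp' * sm := hneg _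
end

section
/- Let R be a ring of characteristic 2 and let s⁻, s⁺, s'⁺, t⁻, t'⁺, τ, ψ, ψ' ∈ R satisfy: (1) s'⁺ = s⁺ * τ; (2) t⁻ * s⁺ = 1; (3) t⁻ = s⁻ * ψ; (4) s⁻ * ψ = s⁻ * ψ' + ψ' * s⁻; (5) t'⁺ = ψ' * s'⁺; (6) s⁻ * s⁺ = 0. Then τ = t⁻ * s'⁺ and t⁻ * s'⁺ = s⁻ * t'⁺. -/
/-- Lemma 4.21 (Zemke), algebraic content: the basepoint-moving map τ satisfies
τ ≃ T⁻S'⁺ ≃ S⁻T'⁺. -/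
theorem basepoint_moving_map_formula
    {R : Type*} [Ring R] (h2 : (2 : R) = 0)
    (sm sp sp' tm tp' τ ψ ψ' : R)
    (h1 : sp' = sp * τ)
    (h3 : tm * sp = 1)
    (h4 : tm = sm * ψ)
    (h5 : sm * ψ = sm * ψ' + ψ' * sm)
    (h6 : tp' = ψ' * sp')
    (h7 : sm * sp = 0) :
    τ = tm * sp' ∧ tm * sp' = sm * tp' := by
  constructor
  · rw [h1, ← mul_assoc, h3, one_mul]
  · have : tm * sp' = sm * ψ' * sp' + ψ' * (sm * sp) * τ := by
      rw [h4, h5, h1]; noncomm_ring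
    rw [this, h7, h6]; noncomm_ring
end
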